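/- Fix an integer d ≥ 0 and real numbers a < b. Suppose a < τ₁ < … < τ_{d+1} = b are points and w₁, …, w_{d+1} are real weights such that ∑_{j=1}^{d+1} w_j p(τ_j) = ∫_a^b p(t) dt for every polynomial p of degree at most 2d. Let χ be a real polynomial of degree at most d, let c ∈ ℝ, and let φ be the polynomial of degree at most d+1 with φ(a) = c and φ(τ_j) = χ(τ_j) for j = 1, …, d+1. Then for every polynomial ψ of degree at most d, ∫_a^b φ'(t) ψ(t) dt − ∫_a^b χ'(t) ψ(t) dt = (χ(a) − c) · ψ(a). -/

import Mathlib

open Polynomial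

/-- Radau interpolation identity behind equation (3.2)/(3.3): if `φ` is the degree `≤ d+1`
interpolant of `χ` at the Gauss–Radau nodes taking the value `c` at the left endpoint,
then `∫ φ'ψ - ∫ χ'ψ = (χ(a) - c) ψ(a)` for every polynomial `ψ` of degree `≤ d`. -/
theorem radau_interpolation_identity (d : ℕ) (a b : ℝ) (hab : a < b)
    (τ : Fin (d + 1) → ℝ) (w : Fin (d + 1) → ℝ)
    (hτmono : StrictMono τ) (hτa : a < τ 0) (hτb : τ (Fin.last d) = b)
    (hexact : ∀ p : Polynomial ℝ, p.natDegree ≤ 2 * d →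
        ∑ j, w j * p.eval (τ j) = ∫ t in a..b, p.eval t)
    (χ : Polynomial ℝ) (hχdeg : χ.natDegree ≤ d) (c : ℝ)
    (φ : Polynomial ℝ) (hφdeg : φ.natDegree ≤ d + 1)
    (hφa : φ.eval a = c) (hφτ : ∀ j, φ.eval (τ j) = χ.eval (τ j))
    (ψ : Polynomial ℝ) (hψdeg : ψ.natDegree ≤ d) :
    (∫ t in a..b, (derivative φ).eval t * ψ.eval t)
      - (∫ t in a..b, (derivative χ).eval t * ψ.eval t)
      = (χ.eval a - c) * ψ.eval a := by
  set e : Polynomial ℝ := φ - χ with he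
  have hedeg : e.natDegree ≤ d + 1 :=
    le_trans (natDegree_sub_le _ _) (max_le hφdeg (le_trans hχdeg (Nat.le_succ d)))
  have heτ : ∀ j, e.eval (τ j) = 0 := by
    intro j; simp [he, hφτ j]
  have heb : e.eval b = 0 := by rw [← hτb]; exact heτ _
  have hea : e.eval a = c - χ.eval a := by simp [he, hφa]
  -- degree bound for e * ψ'
  have hdeg2 : (e * derivative ψ).natDegree ≤ 2 * d := by
    by_cases hd : derivative ψ = 0
    · simp [hd]
    · have hψ0 : ψ.natDegree ≠ 0 := by
        intro h0
        exact hd (by rw [eq_C_of_natDegree_eq_zero h0]; simp)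
      have hlt : (derivative ψ).natDegree < ψ.natDegree := natDegree_derivative_lt hψ0
      have := natDegree_mul_le (p := e) (q := derivative ψ)
      omega
  -- quadrature kills e * ψ'
  have hquad : (∫ t in a..b, (e * derivative ψ).eval t) = 0 := by
    rw [← hexact _ hdeg2]
    apply Finset.sum_eq_zero
    intro j _
    simp [heτ j]
  -- FTC for e * ψ
  have hftc : (∫ t in a..b, (derivative (e * ψ)).eval t)
      = (e * ψ).eval b - (e * ψ).eval a := by
    apply intervalIntegral.integral_eq_sub_of_hasDerivAt
    · intro t _; exact (e * ψ).hasDerivAt t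
    · exact ((derivative (e * ψ)).continuous.intervalIntegrable a b)
  have hint : ∀ p : Polynomial ℝ, IntervalIntegrable (fun t => p.eval t)
      MeasureTheory.volume a b := fun p => p.continuous.intervalIntegrable a b
  have hsplit : (∫ t in a..b, (derivative (e * ψ)).eval t)
      = (∫ t in a..b, (derivative e * ψ).eval t)
        + (∫ t in a..b, (e * derivative ψ).eval t) := by
    rw [derivative_mul, ← intervalIntegral.integral_add (hint _) (hint _)]
    simp
  have key : (∫ t in a..b, (derivative e * ψ).eval t)
      = (χ.eval a - c) * ψ.eval a := by
    have := hftc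
    rw [hsplit, hquad, add_zero] at this
    rw [this]
    simp [heb, hea]
    ring
  have : (∫ t in a..b, (derivative e * ψ).eval t)
      = (∫ t in a..b, (derivative φ).eval t * ψ.eval t)
        - (∫ t in a..b, (derivative χ).eval t * ψ.eval t) := by
    rw [← intervalIntegral.integral_sub (f := fun t => (derivative φ).eval t * ψ.eval t)
      (g := fun t => (derivative χ).eval t * ψ.eval t)
      (((derivative φ).continuous.mul ψ.continuous).intervalIntegrable a b)
      (((derivative χ).continuous.mul ψ.continuous).intervalIntegrable a b)]
    congr 1; ext t; simp [he, sub_mul]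
  rw [← this, key]
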